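/- Let Γ = ⟨α, β⟩ with α, β coprime, both odd, and 3 ≤ α < β. Then the total number of sets Δ ⊆ ℕ with 0 ∈ Δ and Δ + Γ ⊆ Δ that are selfdual equals the binomial coefficient C((α−1)/2 + (β−1)/2, (α−1)/2). -/

import Mathlib

/-- The numerical semigroup `⟨α, β⟩ = {pα + qβ : p, q ∈ ℕ}`, viewed inside `ℤ`. -/
def Gamma (α β : ℕ) : Set ℤ := {x : ℤ | ∃ p q : ℕ, x = (p : ℤ) * α + (q : ℤ) * β}

/-- The dual `Δ* = {c ∈ ℤ : c + Δ ⊆ ⟨α,β⟩}` of an `⟨α,β⟩`-semimodule. -/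
def dualSet (α β : ℕ) (Δ : Set ℤ) : Set ℤ := {c : ℤ | ∀ x ∈ Δ, c + x ∈ Gamma α β}

/-- A normalized `⟨α,β⟩`-semimodule: a subset of `ℕ` containing `0`
with `Δ + Γ ⊆ Δ`. -/
def IsNormalizedSemimodule (α β : ℕ) (Δ : Set ℤ) : Prop :=
  (0 : ℤ) ∈ Δ ∧ (∀ x ∈ Δ, 0 ≤ x) ∧ ∀ x ∈ Δ, ∀ γ ∈ Gamma α β, x + γ ∈ Δ

/-- `Δ` is selfdual if `Δ*` is a shift of `Δ`. -/
def IsSelfdual (α β : ℕ) (Δ : Set ℤ) : Prop :=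
  ∃ c : ℤ, dualSet α β Δ = (fun x => c + x) '' Δ

/-- `E` is the minimal system of generators of `Δ`: it generates `Δ`
(`⋃_{x∈E}(x+Γ) = Δ`) and no proper subset of it generates `Δ`. -/
def IsMinGenSet (α β : ℕ) (Δ : Set ℤ) (E : Finset ℤ) : Prop :=
  (↑E ⊆ Δ) ∧ (⋃ x ∈ (E : Set ℤ), (fun γ => x + γ) '' Gamma α β) = Δ ∧
    ∀ F : Finset ℤ, F ⊂ E → (⋃ x ∈ (F : Set ℤ), (fun γ => x + γ) '' Gamma α β) ≠ Δ

namespace SelfdualCount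

variable {α β : ℕ} {Δ : Set ℤ}


lemma gamma_mem_of (α β : ℕ) (p q : ℕ) : ((p : ℤ) * α + (q : ℤ) * β) ∈ Gamma α β := ⟨p, q, rfl⟩

lemma mem_gamma_iff {α β : ℕ} (hα : 0 < α) {x : ℤ} :
    x ∈ Gamma α β ↔ ∃ q : ℕ, q < α ∧ (q : ℤ) * β ≤ x ∧ (α : ℤ) ∣ (x - q * β) := by
  constructor
  · rintro ⟨p, q, rfl⟩
    refine ⟨q % α, Nat.mod_lt _ hα, ?_, ?_⟩
    · have h1 : (q % α : ℕ) ≤ q := Nat.mod_le _ _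
      have h2 : (0:ℤ) ≤ (p:ℤ) * α := by positivity
      have : ((q % α : ℕ) : ℤ) * β ≤ (q:ℤ) * β := by
        apply mul_le_mul_of_nonneg_right _ (by positivity)
        exact_mod_cast h1
      linarith
    · have hq : (q : ℤ) = (q % α : ℕ) + (q / α : ℕ) * α := by
        exact_mod_cast (Nat.mod_add_div' q α).symm
      refine ⟨p + (q / α : ℕ) * β, ?_⟩
      rw [hq]; ring
  · rintro ⟨q, hq, hle, a, ha⟩
    have ha0 : 0 ≤ a := by
      by_contra h
      push_neg at h
      have : (a : ℤ) * α < 0 := by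
        apply mul_neg_of_neg_of_pos (by exact_mod_cast h) (by exact_mod_cast hα)
      linarith
    refine ⟨a.toNat, q, ?_⟩
    rw [Int.toNat_of_nonneg ha0]
    linarith


/-- Frobenius-type element. -/
def Frob (α β : ℕ) : ℤ := (α : ℤ) * β - α - β

lemma gamma_symm {α β : ℕ} (hα : 0 < α) (hβ : 0 < β) (hcop : Nat.Coprime α β) (z : ℤ) :
    z ∈ Gamma α β ↔ Frob α β - z ∉ Gamma α β := by
  have hcopZ : IsCoprime (α : ℤ) (β : ℤ) := by
    rw [Int.isCoprime_iff_gcd_eq_one]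
    exact_mod_cast hcop
  constructor
  · rintro hz hz'
    rw [mem_gamma_iff hα] at hz hz'
    obtain ⟨q, hq, hle, a, ha⟩ := hz
    obtain ⟨q', hq', hle', a', ha'⟩ := hz'
    have ha0 : 0 ≤ a := by nlinarith [ha, hle]
    have ha0' : 0 ≤ a' := by nlinarith [ha', hle']
    have key : (a + a' + 1) * (α : ℤ) = ((α : ℤ) - (q + q' + 1)) * β := by
      have e2 : Frob α β - z - q' * β = α * a' := ha'
      unfold Frob at e2
      nlinarith [ha, e2]
    have hd2 : (α:ℤ) ∣ ((α:ℤ) - (q + q' + 1)) :=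
      hcopZ.dvd_of_dvd_mul_right ⟨a + a' + 1, by linarith [key]⟩
    have hdvd : (α : ℤ) ∣ ((q : ℤ) + q' + 1) := by
      have := dvd_sub (dvd_refl (α:ℤ)) hd2
      simpa using this
    have h2 : (q : ℤ) + q' + 1 < 2 * α := by
      have h3 : (q:ℤ) < α := by exact_mod_cast hq
      have h4 : (q':ℤ) < α := by exact_mod_cast hq'
      omega
    have heq : (q : ℤ) + q' + 1 = α := by
      obtain ⟨k, hk⟩ := hdvd
      have hαpos : (0:ℤ) < α := by exact_mod_cast hα
      have h1 : (0 : ℤ) < (q : ℤ) + q' + 1 := by positivity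
      have hk1 : 0 < k := by nlinarith
      have hk2 : k < 2 := by nlinarith
      have : k = 1 := by omega
      rw [this] at hk; omega
    rw [heq] at key
    have : (a + a' + 1) * (α:ℤ) = 0 := by rw [key]; ring
    have hαpos : (0:ℤ) < α := by exact_mod_cast hα
    nlinarith
  · intro h
    by_contra hz
    apply h
    haveI : NeZero α := ⟨by omega⟩
    have hu : IsUnit ((β : ℕ) : ZMod α) := by
      rw [ZMod.isUnit_iff_coprime]
      exact hcop.symm
    set b : ZMod α := ((β : ZMod α))⁻¹ * (z : ZMod α) with hb
    have hcong : (α : ℤ) ∣ ((b.val : ℤ) * β - z) := by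
      have : (((b.val : ℤ) * β - z : ℤ) : ZMod α) = 0 := by
        push_cast
        rw [ZMod.natCast_val, ZMod.cast_id, hb, mul_comm ((β : ZMod α))⁻¹ (z : ZMod α),
          mul_assoc, ZMod.inv_mul_of_unit _ hu, mul_one, sub_self]
      exact (ZMod.intCast_zmod_eq_zero_iff_dvd _ α).mp this
    obtain ⟨a, ha⟩ := hcong
    have hbval : b.val < α := ZMod.val_lt b
    have hαpos : (0:ℤ) < α := by exact_mod_cast hα
    have hneg : z - (b.val : ℤ) * β < 0 := by
      by_contra hge
      push_neg at hge
      exact hz ((mem_gamma_iff hα).mpr ⟨b.val, hbval, by linarith, ⟨-a, by linarith⟩⟩)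
    have hapos : 0 < a := by nlinarith
    rw [mem_gamma_iff hα]
    refine ⟨α - 1 - b.val, by omega, ?_, ⟨a - 1, ?_⟩⟩
    · have hcast : ((α - 1 - b.val : ℕ) : ℤ) = (α : ℤ) - 1 - b.val := by
        push_cast [Nat.cast_sub (by omega : b.val ≤ α - 1), Nat.cast_sub (by omega : 1 ≤ α)]
        ring
      rw [hcast]
      unfold Frob
      nlinarith [ha, mul_le_mul_of_nonneg_left (by omega : (1:ℤ) ≤ a) (le_of_lt hαpos)]
    · have hcast : ((α - 1 - b.val : ℕ) : ℤ) = (α : ℤ) - 1 - b.val := by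
        push_cast [Nat.cast_sub (by omega : b.val ≤ α - 1), Nat.cast_sub (by omega : 1 ≤ α)]
        ring
      rw [hcast]
      unfold Frob
      linarith [ha]


variable {α β : ℕ} {Δ : Set ℤ}

/-- minimal element of `Δ` in the class `b·β` modulo `α`. -/
noncomputable def nu (α β : ℕ) (Δ : Set ℤ) (b : ZMod α) : ℕ :=
  sInf {n : ℕ | (n : ℤ) ∈ Δ ∧ ((n : ZMod α)) = b * β}

lemma nsm_add_mem (hΔ : IsNormalizedSemimodule α β Δ) {x : ℤ} (hx : x ∈ Δ) (p q : ℕ) :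
    x + ((p : ℤ) * α + (q : ℤ) * β) ∈ Δ :=
  hΔ.2.2 x hx _ ⟨p, q, rfl⟩

lemma nu_set_nonempty (hα : 0 < α) (hΔ : IsNormalizedSemimodule α β Δ) (b : ZMod α) :
    {n : ℕ | (n : ℤ) ∈ Δ ∧ ((n : ZMod α)) = b * β}.Nonempty := by
  haveI : NeZero α := ⟨by omega⟩
  refine ⟨b.val * β, ?_, ?_⟩
  · have := nsm_add_mem hΔ hΔ.1 0 b.val
    push_cast
    simpa using this
  · push_cast
    rw [ZMod.natCast_val, ZMod.cast_id]

lemma nu_spec (hα : 0 < α) (hΔ : IsNormalizedSemimodule α β Δ) (b : ZMod α) :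
    ((nu α β Δ b : ℤ) ∈ Δ) ∧ (((nu α β Δ b : ℕ) : ZMod α) = b * β) :=
  Nat.sInf_mem (nu_set_nonempty hα hΔ b)

lemma nu_class_int (hα : 0 < α) (hΔ : IsNormalizedSemimodule α β Δ) (b : ZMod α) :
    (((nu α β Δ b : ℤ) : ZMod α)) = b * β := by
  push_cast
  exact (nu_spec hα hΔ b).2

lemma nu_min (b : ZMod α) {n : ℕ} (hn : (n : ℤ) ∈ Δ) (hc : ((n : ZMod α)) = b * β) :
    nu α β Δ b ≤ n :=
  Nat.sInf_le ⟨hn, hc⟩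

lemma nu_le_int (hΔ : IsNormalizedSemimodule α β Δ) (b : ZMod α) {x : ℤ} (hx : x ∈ Δ)
    (hc : ((x : ZMod α)) = b * β) : (nu α β Δ b : ℤ) ≤ x := by
  have h0 : 0 ≤ x := hΔ.2.1 x hx
  lift x to ℕ using h0 with n
  exact_mod_cast nu_min b hx (by exact_mod_cast hc)

lemma mem_of_dvd_ge (hα : 0 < α) (hΔ : IsNormalizedSemimodule α β Δ) {x y : ℤ} (hx : x ∈ Δ) (hxy : x ≤ y)
    (hdvd : (α : ℤ) ∣ y - x) : y ∈ Δ := by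
  obtain ⟨k, hk⟩ := hdvd
  have hk0 : 0 ≤ k := by
    nlinarith [hk, hxy, (by exact_mod_cast hα : (0:ℤ) < α)]
  have := nsm_add_mem hΔ hx k.toNat 0
  have hke : (k.toNat : ℤ) = k := Int.toNat_of_nonneg hk0
  have : x + (k : ℤ) * α ∈ Δ := by rw [← hke]; simpa using this
  have hxe : y = x + k * α := by linarith [hk]
  rwa [← hxe] at this

/-- the class index of an integer: `b` such that `x ≡ b β`. -/
def bOf (α β : ℕ) (x : ℤ) : ZMod α := ((β : ZMod α))⁻¹ * (x : ZMod α)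

lemma bOf_class (hcop : Nat.Coprime α β) (x : ℤ) : ((x : ZMod α)) = bOf α β x * β := by
  have hu : IsUnit ((β : ℕ) : ZMod α) := by
    rw [ZMod.isUnit_iff_coprime]; exact hcop.symm
  rw [bOf, mul_assoc, mul_comm ((x : ℤ) : ZMod α), ← mul_assoc,
    ZMod.inv_mul_of_unit _ hu, one_mul]

lemma dvd_sub_of_classes {x y : ℤ} {b : ZMod α} (hx : ((x : ZMod α)) = b * β)
    (hy : ((y : ZMod α)) = b * β) : (α : ℤ) ∣ y - x := by
  have : ((y - x : ℤ) : ZMod α) = 0 := by push_cast; rw [hx, hy]; ring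
  exact (ZMod.intCast_zmod_eq_zero_iff_dvd _ α).mp this

lemma mem_iff_nu_le (hα : 0 < α) (hΔ : IsNormalizedSemimodule α β Δ) (hcop : Nat.Coprime α β)
    (x : ℤ) : x ∈ Δ ↔ (nu α β Δ (bOf α β x) : ℤ) ≤ x := by
  constructor
  · intro hx; exact nu_le_int hΔ _ hx (bOf_class hcop x)
  · intro hle
    exact mem_of_dvd_ge hα hΔ (nu_spec hα hΔ _).1 hle
      (dvd_sub_of_classes (nu_class_int hα hΔ _) (bOf_class hcop x))

lemma nu_zero (hΔ : IsNormalizedSemimodule α β Δ) : nu α β Δ 0 = 0 :=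
  Nat.le_zero.mp (nu_min 0 (by exact_mod_cast hΔ.1) (by simp))

lemma nu_succ (hα : 0 < α) (hΔ : IsNormalizedSemimodule α β Δ) (b : ZMod α) :
    (nu α β Δ (b + 1) : ℤ) ≤ (nu α β Δ b : ℤ) + β := by
  have hmem := nsm_add_mem hΔ (nu_spec hα hΔ b).1 0 1
  simp only [Nat.cast_zero, zero_mul, Nat.cast_one, one_mul, zero_add] at hmem
  have hc : (((nu α β Δ b : ℤ) + β : ℤ) : ZMod α) = (b + 1) * β := by
    push_cast
    rw [(nu_spec hα hΔ b).2]; ring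
  exact nu_le_int hΔ _ hmem hc

lemma nu_min_char (hα : 0 < α) (hΔ : IsNormalizedSemimodule α β Δ) (b : ZMod α) {x : ℤ} (hx : x ∈ Δ)
    (hx' : x - α ∉ Δ) (hc : ((x : ZMod α)) = b * β) : (nu α β Δ b : ℤ) = x := by
  have hle := nu_le_int hΔ b hx hc
  rcases eq_or_lt_of_le hle with h | h
  · exact h
  · exfalso
    apply hx'
    have hdvd : (α : ℤ) ∣ x - nu α β Δ b :=
      dvd_sub_of_classes (nu_class_int hα hΔ b) hc
    obtain ⟨k, hk⟩ := hdvd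
    have hαZ : (0:ℤ) < α := by exact_mod_cast hα
    have hk1 : 1 ≤ k := by nlinarith
    refine mem_of_dvd_ge hα hΔ (nu_spec hα hΔ b).1 ?_ ⟨k - 1, by linarith⟩
    nlinarith

variable {α β : ℕ} {Δ : Set ℤ}
lemma frob_not_mem (hα : 0 < α) (hβ : 0 < β) (hcop : Nat.Coprime α β) :
    Frob α β ∉ Gamma α β := by
  have h0 : (0 : ℤ) ∈ Gamma α β := ⟨0, 0, by simp⟩
  have := (gamma_symm hα hβ hcop 0).mp h0
  simpa using this

lemma dual_eq (hα : 0 < α) (hβ : 0 < β) (hcop : Nat.Coprime α β)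
    (hΔ : IsNormalizedSemimodule α β Δ) :
    dualSet α β Δ = {c : ℤ | Frob α β - c ∉ Δ} := by
  ext c
  constructor
  · intro hc hFc
    have := hc (Frob α β - c) hFc
    simp only [add_sub_cancel] at this
    exact frob_not_mem hα hβ hcop this
  · intro hc x hx
    by_contra hγ
    have hmem : Frob α β - (c + x) ∈ Gamma α β := by
      by_contra h'
      exact hγ ((gamma_symm hα hβ hcop _).mpr h')
    have := hΔ.2.2 x hx _ hmem
    apply hc
    have hxe : x + (Frob α β - (c + x)) = Frob α β - c := by ring
    rwa [hxe] at this

lemma selfdual_iff_symm (hα : 0 < α) (hβ : 0 < β) (hcop : Nat.Coprime α β)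
    (hΔ : IsNormalizedSemimodule α β Δ) :
    IsSelfdual α β Δ ↔ ∃ e : ℤ, ∀ x : ℤ, x ∈ Δ ↔ e - x ∉ Δ := by
  have himg : ∀ c : ℤ, (fun x => c + x) '' Δ = {y : ℤ | y - c ∈ Δ} := by
    intro c; ext y
    constructor
    · rintro ⟨x, hx, rfl⟩; simpa using hx
    · intro hy; exact ⟨y - c, hy, by ring⟩
  constructor
  · rintro ⟨c, hc⟩
    rw [dual_eq hα hβ hcop hΔ, himg] at hc
    refine ⟨Frob α β - c, fun y => ?_⟩
    have h1 := (Set.ext_iff.mp hc (y + c)).symm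
    simp only [Set.mem_setOf_eq, add_sub_cancel_right] at h1
    constructor
    · intro hy
      have := h1.mp hy
      convert this using 2
      ring
    · intro hy
      apply h1.mpr
      convert hy using 2
      ring
  · rintro ⟨e, he⟩
    refine ⟨Frob α β - e, ?_⟩
    rw [dual_eq hα hβ hcop hΔ, himg]
    ext x
    simp only [Set.mem_setOf_eq]
    have := he (x - (Frob α β - e))
    have he2 : e - (x - (Frob α β - e)) = Frob α β - x := by ring
    rw [he2] at this
    exact ⟨fun h => this.mpr h, fun h => this.mp h⟩

lemma bOf_eq_of_class (hcop : Nat.Coprime α β) {x : ℤ} {b : ZMod α}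
    (hx : ((x : ZMod α)) = b * β) : bOf α β x = b := by
  have hu : IsUnit ((β : ℕ) : ZMod α) := by
    rw [ZMod.isUnit_iff_coprime]; exact hcop.symm
  rw [bOf, hx, mul_comm b, ← mul_assoc, ZMod.inv_mul_of_unit _ hu, one_mul]

lemma lt_add_iff_le_of_dvd {x n : ℤ} (hα : 0 < α) (hdvd : (α : ℤ) ∣ x - n) :
    n < x + α ↔ n ≤ x := by
  obtain ⟨k, hk⟩ := hdvd
  have hαZ : (0:ℤ) < α := by exact_mod_cast hα
  constructor
  · intro h
    by_contra h'
    push_neg at h'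
    have hk1 : k ≤ -1 := by nlinarith
    nlinarith
  · intro h; linarith

lemma symm_iff_center (hα : 0 < α) (hcop : Nat.Coprime α β)
    (hΔ : IsNormalizedSemimodule α β Δ) :
    (∃ e : ℤ, ∀ x : ℤ, x ∈ Δ ↔ e - x ∉ Δ) ↔
      ∃ s : ZMod α, ∀ b : ZMod α,
        (nu α β Δ b : ℤ) + (nu α β Δ (s - b) : ℤ) = (nu α β Δ s : ℤ) := by
  have hαZ : (0:ℤ) < α := by exact_mod_cast hα
  constructor
  · rintro ⟨e, he⟩
    refine ⟨bOf α β e, fun b => ?_⟩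
    set s := bOf α β e with hs
    have hes : ((e : ZMod α)) = s * β := bOf_class hcop e
    have key : ∀ b : ZMod α, (nu α β Δ (s - b) : ℤ) = e - nu α β Δ b + α := by
      intro b
      have h2 : (nu α β Δ b : ℤ) - α ∉ Δ := by
        intro hmem
        have := nu_le_int hΔ b hmem (by
          push_cast
          rw [(nu_spec hα hΔ b).2]
          simp)
        linarith
      have h3 : e - ((nu α β Δ b : ℤ) - α) ∈ Δ := by
        by_contra h'
        exact h2 ((he _).mpr h')
      have h3' : e - (nu α β Δ b : ℤ) + α ∈ Δ := by
        have : e - ((nu α β Δ b : ℤ) - α) = e - nu α β Δ b + α := by ring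
        rwa [this] at h3
      have h4 : e - (nu α β Δ b : ℤ) + α - α ∉ Δ := by
        have h1 := (he _).mp (nu_spec hα hΔ b).1
        have : e - (nu α β Δ b : ℤ) + α - α = e - nu α β Δ b := by ring
        rw [this]
        exact h1
      have hc : (((e - (nu α β Δ b : ℤ) + α : ℤ)) : ZMod α) = (s - b) * β := by
        push_cast
        rw [hes, (nu_spec hα hΔ b).2]
        simp
        ring
      exact nu_min_char hα hΔ _ h3' h4 hc
    have h0 := key 0
    rw [nu_zero hΔ] at h0
    simp only [Nat.cast_zero, sub_zero] at h0
    have hb := key b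
    rw [hb, h0]
    ring
  · rintro ⟨s, hc⟩
    refine ⟨(nu α β Δ s : ℤ) - α, fun x => ?_⟩
    set b := bOf α β x with hb
    have hxb : ((x : ZMod α)) = b * β := bOf_class hcop x
    have hbe : bOf α β ((nu α β Δ s : ℤ) - α - x) = s - b := by
      apply bOf_eq_of_class hcop
      push_cast
      rw [(nu_spec hα hΔ s).2, hxb]
      simp
      ring
    rw [mem_iff_nu_le hα hΔ hcop x, mem_iff_nu_le hα hΔ hcop ((nu α β Δ s : ℤ) - α - x), hbe]
    have hcb := hc b
    have hdvd : (α : ℤ) ∣ x - (nu α β Δ b : ℤ) :=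
      dvd_sub_of_classes (nu_class_int hα hΔ b) hxb
    rw [← hb]
    constructor
    · intro h hle
      have : (nu α β Δ b : ℤ) < x + α := by linarith
      linarith
    · intro h
      push_neg at h
      have h2 : (nu α β Δ b : ℤ) < x + α := by linarith
      exact (lt_add_iff_le_of_dvd hα hdvd).mp h2

variable {α β : ℕ}
/-- partial sums of `β - α·w`. -/
def Tfun (α β : ℕ) (w : ZMod α → ℕ) : ℕ → ℤ
  | 0 => 0
  | n + 1 => Tfun α β w n + β - α * w n

lemma Tfun_class (w : ZMod α → ℕ) (n : ℕ) :
    ((Tfun α β w n : ℤ) : ZMod α) = (n : ZMod α) * β := by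
  induction n with
  | zero => simp [Tfun]
  | succ n ih =>
    rw [Tfun]
    push_cast
    rw [ih]
    simp [ZMod.natCast_self]
    ring

lemma Tfun_add (w : ZMod α → ℕ) (n m : ℕ) :
    Tfun α β w (n + m) =
      Tfun α β w n + m * β - α * ∑ j ∈ Finset.range m, (w ((n + j : ℕ) : ZMod α) : ℤ) := by
  induction m with
  | zero => simp
  | succ m ih =>
    have : n + (m + 1) = (n + m) + 1 := by ring
    rw [this, Tfun, ih, Finset.sum_range_succ]
    push_cast
    ring

lemma sum_shift [NeZero α] (w : ZMod α → ℕ) (n : ℕ) :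
    ∑ j ∈ Finset.range α, (w ((n + j : ℕ) : ZMod α) : ℤ) = ∑ b : ZMod α, (w b : ℤ) := by
  have hbij : Function.Bijective (fun j : Fin α => ((n + (j : ℕ) : ℕ) : ZMod α)) := by
    rw [Fintype.bijective_iff_injective_and_card]
    refine ⟨?_, by simp [ZMod.card]⟩
    intro i j hij
    simp only at hij
    have : ((i : ℕ) : ZMod α) = ((j : ℕ) : ZMod α) := by
      push_cast at hij ⊢
      exact add_left_cancel hij
    have hi := ZMod.val_cast_of_lt i.2
    have hj := ZMod.val_cast_of_lt j.2
    have : (i : ℕ) = (j : ℕ) := by rw [← hi, ← hj, this]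
    exact Fin.ext this
  rw [← Fintype.sum_bijective _ hbij (fun j => (w ((n + (j : ℕ) : ℕ) : ZMod α) : ℤ))
    (fun b => (w b : ℤ)) (fun j => rfl)]
  exact (Fin.sum_univ_eq_sum_range (fun j => (w ((n + j : ℕ) : ZMod α) : ℤ)) α).symm

lemma Tfun_period [NeZero α] (w : ZMod α → ℕ) (hsum : ∑ b : ZMod α, w b = β) (n : ℕ) :
    Tfun α β w (n + α) = Tfun α β w n := by
  rw [Tfun_add, sum_shift w n]
  have : ∑ b : ZMod α, (w b : ℤ) = (β : ℤ) := by exact_mod_cast hsum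
  rw [this]
  ring

lemma Tfun_mod [NeZero α] (w : ZMod α → ℕ) (hsum : ∑ b : ZMod α, w b = β) (n : ℕ) :
    Tfun α β w n = Tfun α β w (n % α) := by
  conv_lhs => rw [← Nat.mod_add_div n α]
  generalize n / α = k
  induction k with
  | zero => simp
  | succ k ih =>
    have : n % α + α * (k + 1) = (n % α + α * k) + α := by ring
    rw [this, Tfun_period w hsum, ih]

/-- `Tfun` descended to `ZMod α`. -/
def Tz (α β : ℕ) (w : ZMod α → ℕ) (b : ZMod α) : ℤ := Tfun α β w b.val

lemma Tz_cast [NeZero α] (w : ZMod α → ℕ) (hsum : ∑ b : ZMod α, w b = β) (n : ℕ) :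
    Tz α β w ((n : ZMod α)) = Tfun α β w n := by
  rw [Tz, ZMod.val_natCast, ← Tfun_mod w hsum]

lemma Tz_succ [NeZero α] (w : ZMod α → ℕ) (hsum : ∑ b : ZMod α, w b = β) (x : ZMod α) :
    Tz α β w (x + 1) = Tz α β w x + β - α * w x := by
  have hx : ((x.val : ℕ) : ZMod α) = x := by rw [ZMod.natCast_val, ZMod.cast_id]
  have h1 : x + 1 = (((x.val + 1 : ℕ)) : ZMod α) := by push_cast [hx]; ring
  rw [h1, Tz_cast w hsum, Tfun, ← Tz_cast w hsum x.val, hx]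

lemma Tz_class [NeZero α] (w : ZMod α → ℕ) (hsum : ∑ b : ZMod α, w b = β) (x : ZMod α) :
    ((Tz α β w x : ℤ) : ZMod α) = x * β := by
  have hx : ((x.val : ℕ) : ZMod α) = x := by rw [ZMod.natCast_val, ZMod.cast_id]
  rw [Tz, Tfun_class, hx]

lemma Tz_inj [NeZero α] (hcop : Nat.Coprime α β) (w : ZMod α → ℕ)
    (hsum : ∑ b : ZMod α, w b = β) {x y : ZMod α} (h : Tz α β w x = Tz α β w y) : x = y := by
  have hu : IsUnit ((β : ℕ) : ZMod α) := by
    rw [ZMod.isUnit_iff_coprime]; exact hcop.symm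
  have h1 : x * (β : ZMod α) = y * β := by
    rw [← Tz_class w hsum x, ← Tz_class w hsum y, h]
  refine hu.mul_left_cancel ?_
  rw [mul_comm _ x, mul_comm _ y, h1]

lemma Tz_sym [NeZero α] (w : ZMod α → ℕ) (hsum : ∑ b : ZMod α, w b = β)
    (hsym : ∀ b, w (-b) = w b) (x : ZMod α) :
    Tz α β w x + Tz α β w (1 - x) = Tz α β w 1 := by
  have key : ∀ n : ℕ, Tz α β w ((n : ZMod α)) + Tz α β w (1 - (n : ZMod α)) = Tz α β w 1 := by
    intro n
    induction n with
    | zero => simp [Tz, ZMod.val_zero, Tfun]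
    | succ n ih =>
      push_cast
      set y : ZMod α := (n : ZMod α)
      have h1 : Tz α β w (y + 1) = Tz α β w y + β - α * w y := Tz_succ w hsum y
      have h2 : Tz α β w ((-y) + 1) = Tz α β w (-y) + β - α * w (-y) := Tz_succ w hsum (-y)
      have h3 : (1 : ZMod α) - y = -y + 1 := by ring
      have h4 : (1 : ZMod α) - (y + 1) = -y := by ring
      rw [h4, h1]
      rw [h3, h2] at ih
      rw [hsym y] at ih
      linarith
  have hx : ((x.val : ℕ) : ZMod α) = x := by rw [ZMod.natCast_val, ZMod.cast_id]
  have := key x.val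
  rwa [hx] at this

/-- the minimizing index of `Tz`. -/
noncomputable def bstar (α β : ℕ) [NeZero α] (w : ZMod α → ℕ) : ZMod α :=
  Classical.choose (Finset.exists_min_image Finset.univ (Tz α β w) ⟨0, Finset.mem_univ 0⟩)

lemma bstar_min (α β : ℕ) [NeZero α] (w : ZMod α → ℕ) (y : ZMod α) :
    Tz α β w (bstar α β w) ≤ Tz α β w y :=
  (Classical.choose_spec (Finset.exists_min_image Finset.univ (Tz α β w)
    ⟨0, Finset.mem_univ 0⟩)).2 y (Finset.mem_univ y)

/-- the normalized minimal-value function. -/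
noncomputable def theta (α β : ℕ) [NeZero α] (w : ZMod α → ℕ) (b : ZMod α) : ℤ :=
  Tz α β w (b + bstar α β w) - Tz α β w (bstar α β w)

/-- the semimodule associated to `w`. -/
noncomputable def DeltaOf (α β : ℕ) [NeZero α] (w : ZMod α → ℕ) : Set ℤ :=
  {x : ℤ | theta α β w (bOf α β x) ≤ x}

section DeltaOf
variable [NeZero α]

lemma theta_nonneg (w : ZMod α → ℕ) (b : ZMod α) : 0 ≤ theta α β w b :=
  sub_nonneg.mpr (bstar_min α β w _)

lemma theta_zero (w : ZMod α → ℕ) : theta α β w 0 = 0 := by simp [theta]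

lemma theta_class [NeZero α] (w : ZMod α → ℕ) (hsum : ∑ b : ZMod α, w b = β) (b : ZMod α) :
    ((theta α β w b : ℤ) : ZMod α) = b * β := by
  rw [theta]
  push_cast
  rw [Tz_class w hsum, Tz_class w hsum]
  ring

lemma theta_succ [NeZero α] (w : ZMod α → ℕ) (hsum : ∑ b : ZMod α, w b = β) (b : ZMod α) :
    theta α β w (b + 1) = theta α β w b + β - α * w (b + bstar α β w) := by
  rw [theta, theta, add_right_comm, Tz_succ w hsum]
  ring

lemma theta_succ_le [NeZero α] (w : ZMod α → ℕ) (hsum : ∑ b : ZMod α, w b = β) (b : ZMod α) :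
    theta α β w (b + 1) ≤ theta α β w b + β := by
  rw [theta_succ w hsum]
  have : (0:ℤ) ≤ α * w (b + bstar α β w) := by positivity
  linarith

lemma nsm_DeltaOf [NeZero α] (hcop : Nat.Coprime α β) (w : ZMod α → ℕ)
    (hsum : ∑ b : ZMod α, w b = β) : IsNormalizedSemimodule α β (DeltaOf α β w) := by
  have hmemα : ∀ x ∈ DeltaOf α β w, x + α ∈ DeltaOf α β w := by
    intro x hx
    have hb : bOf α β (x + α) = bOf α β x := by
      apply bOf_eq_of_class hcop
      push_cast
      simp [ZMod.natCast_self]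
      exact bOf_class hcop x
    rw [DeltaOf, Set.mem_setOf_eq, hb]
    have : (0:ℤ) ≤ α := by positivity
    have hx' : theta α β w (bOf α β x) ≤ x := hx
    linarith
  have hmemβ : ∀ x ∈ DeltaOf α β w, x + β ∈ DeltaOf α β w := by
    intro x hx
    have hb : bOf α β (x + β) = bOf α β x + 1 := by
      apply bOf_eq_of_class hcop
      push_cast
      rw [bOf_class hcop x]
      ring
    rw [DeltaOf, Set.mem_setOf_eq, hb]
    have hx' : theta α β w (bOf α β x) ≤ x := hx
    have := theta_succ_le w hsum (bOf α β x)
    linarith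
  refine ⟨?_, ?_, ?_⟩
  · show theta α β w (bOf α β 0) ≤ 0
    have : bOf α β (0:ℤ) = 0 := by simp [bOf]
    rw [this, theta_zero]
  · intro x hx
    have hx' : theta α β w (bOf α β x) ≤ x := hx
    have := theta_nonneg (β := β) w (bOf α β x)
    linarith
  · rintro x hx γ ⟨p, q, rfl⟩
    have hp : ∀ p' : ℕ, ∀ y ∈ DeltaOf α β w, y + (p' : ℤ) * α ∈ DeltaOf α β w := by
      intro p'
      induction p' with
      | zero => intro y hy; simpa using hy
      | succ p' ih =>
        intro y hy
        have := hmemα _ (ih y hy)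
        have he : y + (p' : ℤ) * α + α = y + ((p' : ℕ) + 1 : ℕ) * α := by push_cast; ring
        rw [he] at this
        exact_mod_cast this
    have hq : ∀ q' : ℕ, ∀ y ∈ DeltaOf α β w, y + (q' : ℤ) * β ∈ DeltaOf α β w := by
      intro q'
      induction q' with
      | zero => intro y hy; simpa using hy
      | succ q' ih =>
        intro y hy
        have := hmemβ _ (ih y hy)
        have he : y + (q' : ℤ) * β + β = y + ((q' : ℕ) + 1 : ℕ) * β := by push_cast; ring
        rw [he] at this
        exact_mod_cast this
    have := hq q _ (hp p x hx)
    have he : x + (p : ℤ) * α + (q : ℤ) * β = x + ((p : ℤ) * α + (q : ℤ) * β) := by ring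
    rwa [he] at this

end DeltaOf

section Inverse
variable [NeZero α]

lemma hposα [NeZero α] : 0 < α := Nat.pos_of_ne_zero (NeZero.ne α)

lemma nu_DeltaOf (hcop : Nat.Coprime α β) (w : ZMod α → ℕ) (hsum : ∑ b : ZMod α, w b = β)
    (b : ZMod α) : (nu α β (DeltaOf α β w) b : ℤ) = theta α β w b := by
  have hα : 0 < α := hposα
  have hαZ : (0:ℤ) < α := by exact_mod_cast hα
  have hΔ := nsm_DeltaOf hcop w hsum
  refine nu_min_char hα hΔ b ?_ ?_ (theta_class w hsum b)
  · show theta α β w (bOf α β (theta α β w b)) ≤ theta α β w b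
    rw [bOf_eq_of_class hcop (theta_class w hsum b)]
  · intro hmem
    have hcl : (((theta α β w b - α : ℤ)) : ZMod α) = b * β := by
      push_cast
      rw [theta_class w hsum b]
      simp
    have h2 : theta α β w (bOf α β (theta α β w b - α)) ≤ theta α β w b - α := hmem
    rw [bOf_eq_of_class hcop hcl] at h2
    linarith

lemma center_DeltaOf (w : ZMod α → ℕ) (hsum : ∑ b : ZMod α, w b = β)
    (hsym : ∀ b, w (-b) = w b) (b : ZMod α) :
    theta α β w b + theta α β w ((1 - 2 * bstar α β w) - b) =
      theta α β w (1 - 2 * bstar α β w) := by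
  have h1 := Tz_sym w hsum hsym (b + bstar α β w)
  have h2 := Tz_sym w hsum hsym (bstar α β w)
  have e1 : (1 - 2 * bstar α β w) - b + bstar α β w = 1 - (b + bstar α β w) := by ring
  have e2 : (1 - 2 * bstar α β w) + bstar α β w = 1 - bstar α β w := by ring
  simp only [theta, e1, e2]
  linarith

lemma selfdual_DeltaOf (hβ : 0 < β) (hcop : Nat.Coprime α β) (w : ZMod α → ℕ)
    (hsum : ∑ b : ZMod α, w b = β) (hsym : ∀ b, w (-b) = w b) :
    IsSelfdual α β (DeltaOf α β w) := by
  have hα : 0 < α := hposα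
  have hΔ := nsm_DeltaOf hcop w hsum
  rw [selfdual_iff_symm hα hβ hcop hΔ, symm_iff_center hα hcop hΔ]
  refine ⟨1 - 2 * bstar α β w, fun b => ?_⟩
  rw [nu_DeltaOf hcop w hsum, nu_DeltaOf hcop w hsum, nu_DeltaOf hcop w hsum]
  exact center_DeltaOf w hsum hsym b

/-- a center of a selfdual semimodule is unique. -/
lemma center_unique (hcop : Nat.Coprime α β) (hΔ : IsNormalizedSemimodule α β Δ)
    {s t : ZMod α}
    (hs : ∀ b : ZMod α, (nu α β Δ b : ℤ) + (nu α β Δ (s - b) : ℤ) = (nu α β Δ s : ℤ))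
    (ht : ∀ b : ZMod α, (nu α β Δ b : ℤ) + (nu α β Δ (t - b) : ℤ) = (nu α β Δ t : ℤ)) :
    s = t := by
  have hα : 0 < α := hposα
  have key : ∀ x : ZMod α, (nu α β Δ (x + (s - t)) : ℤ) =
      (nu α β Δ x : ℤ) + ((nu α β Δ s : ℤ) - (nu α β Δ t : ℤ)) := by
    intro x
    have h1 := hs (t - x)
    have h2 := ht (t - x)
    have e1 : s - (t - x) = x + (s - t) := by ring
    have e2 : t - (t - x) = x := by ring
    rw [e1] at h1
    rw [e2] at h2
    linarith
  have hsumeq : ∑ x : ZMod α, (nu α β Δ (x + (s - t)) : ℤ) = ∑ x : ZMod α, (nu α β Δ x : ℤ) :=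
    Fintype.sum_equiv (Equiv.addRight (s - t)) _ _ (fun x => rfl)
  have hzero : (nu α β Δ s : ℤ) - (nu α β Δ t : ℤ) = 0 := by
    have heq : ∑ x : ZMod α, (nu α β Δ (x + (s - t)) : ℤ) =
        ∑ x : ZMod α, ((nu α β Δ x : ℤ) + ((nu α β Δ s : ℤ) - (nu α β Δ t : ℤ))) :=
      Finset.sum_congr rfl (fun x _ => key x)
    rw [hsumeq, Finset.sum_add_distrib, Finset.sum_const] at heq
    have hcard : (Finset.univ : Finset (ZMod α)).card = α := by
      simpa using ZMod.card α
    rw [hcard, nsmul_eq_mul] at heq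
    have hαZ : (0:ℤ) < α := by exact_mod_cast hα
    nlinarith [heq]
  have h0 := key 0
  rw [nu_zero hΔ, hzero, zero_add] at h0
  simp only [Nat.cast_zero, add_zero] at h0
  have hcl : ((s - t) : ZMod α) * β = 0 := by
    have := nu_class_int hα hΔ (0 + (s - t))
    simp only [zero_add] at this
    rw [h0] at this
    simp only [Int.cast_zero] at this
    exact this.symm
  have hu : IsUnit ((β : ℕ) : ZMod α) := by
    rw [ZMod.isUnit_iff_coprime]; exact hcop.symm
  have : s - t = 0 := by
    refine hu.mul_left_cancel ?_
    rw [mul_comm, hcl, mul_zero]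
  have := sub_eq_zero.mp this
  exact this

end Inverse

section Phi
variable [NeZero α]

lemma isUnit_two (hodd : Odd α) : IsUnit (2 : ZMod α) := by
  have h2 : ((2:ℕ) : ZMod α) = (2 : ZMod α) := by push_cast; rfl
  rw [← h2, ZMod.isUnit_iff_coprime]
  exact Nat.coprime_two_left.mpr hodd

/-- half of `s - 1`. -/
noncomputable def cOf (s : ZMod α) : ZMod α := (2 : ZMod α)⁻¹ * (s - 1)

lemma two_mul_cOf (hodd : Odd α) (s : ZMod α) : 2 * cOf s = s - 1 := by
  rw [cOf, ← mul_assoc, ZMod.mul_inv_of_unit _ (isUnit_two hodd), one_mul]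

lemma half_unique (hodd : Odd α) {x y : ZMod α} (h : 2 * x = 2 * y) : x = y :=
  (isUnit_two hodd).mul_left_cancel h

lemma sub_cOf (hodd : Odd α) (s : ZMod α) : s - cOf s = cOf s + 1 := by
  have h := two_mul_cOf hodd s
  linear_combination -h

/-- the weight function associated to a semimodule and a shift `c`. -/
noncomputable def wOf (α β : ℕ) [NeZero α] (Δ : Set ℤ) (c : ZMod α) (b : ZMod α) : ℕ :=
  (((nu α β Δ (b + c) : ℤ) + β - (nu α β Δ (b + c + 1) : ℤ)) / α).toNat

lemma wOf_spec (hΔ : IsNormalizedSemimodule α β Δ) (c b : ZMod α) :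
    (α : ℤ) * (wOf α β Δ c b : ℤ) =
      (nu α β Δ (b + c) : ℤ) + β - (nu α β Δ (b + c + 1) : ℤ) := by
  have hα : 0 < α := hposα
  have hαZ : (0:ℤ) < α := by exact_mod_cast hα
  set num : ℤ := (nu α β Δ (b + c) : ℤ) + β - (nu α β Δ (b + c + 1) : ℤ) with hnum
  have hnn : 0 ≤ num := by
    have := nu_succ hα hΔ (b + c)
    rw [hnum]; linarith
  have hy : (((nu α β Δ (b + c) : ℤ) + β : ℤ) : ZMod α) = (b + c + 1) * β := by
    push_cast
    rw [(nu_spec hα hΔ (b + c)).2]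
    ring
  have hdvd : (α : ℤ) ∣ num := by
    have := dvd_sub_of_classes (nu_class_int hα hΔ (b + c + 1)) hy
    rwa [hnum]
  have h1 : (wOf α β Δ c b : ℤ) = num / α := by
    rw [wOf, Int.toNat_of_nonneg (Int.ediv_nonneg hnn (le_of_lt hαZ))]
  rw [h1, Int.mul_ediv_cancel' hdvd]

lemma wOf_sum (hΔ : IsNormalizedSemimodule α β Δ) (c : ZMod α) :
    ∑ b : ZMod α, wOf α β Δ c b = β := by
  have hα : 0 < α := hposα
  have hαZ : (0:ℤ) < α := by exact_mod_cast hα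
  have h1 : ∑ b : ZMod α, (nu α β Δ (b + c) : ℤ) = ∑ b : ZMod α, (nu α β Δ b : ℤ) :=
    Fintype.sum_equiv (Equiv.addRight c) _ _ (fun x => rfl)
  have h2 : ∑ b : ZMod α, (nu α β Δ (b + c + 1) : ℤ) = ∑ b : ZMod α, (nu α β Δ b : ℤ) := by
    refine Fintype.sum_equiv (Equiv.addRight (c + 1)) _ _ (fun x => ?_)
    simp [add_assoc]
  have hcard : (Finset.univ : Finset (ZMod α)).card = α := by simpa using ZMod.card α
  have key : (α : ℤ) * ∑ b : ZMod α, (wOf α β Δ c b : ℤ) = α * β := by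
    rw [Finset.mul_sum]
    have : ∀ b : ZMod α, (α : ℤ) * (wOf α β Δ c b : ℤ) =
        (nu α β Δ (b + c) : ℤ) + β - (nu α β Δ (b + c + 1) : ℤ) := wOf_spec hΔ c
    rw [Finset.sum_congr rfl (fun b _ => this b)]
    rw [Finset.sum_sub_distrib, Finset.sum_add_distrib, h1, h2, Finset.sum_const, hcard]
    push_cast
    ring
  have h3 : ∑ b : ZMod α, (wOf α β Δ c b : ℤ) = β := by
    have hne : (α : ℤ) ≠ 0 := by positivity
    exact mul_left_cancel₀ hne key
  exact_mod_cast h3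

lemma wOf_symm (hΔ : IsNormalizedSemimodule α β Δ) (hodd : Odd α) {s : ZMod α}
    (hs : ∀ b : ZMod α, (nu α β Δ b : ℤ) + (nu α β Δ (s - b) : ℤ) = (nu α β Δ s : ℤ))
    (b : ZMod α) : wOf α β Δ (cOf s) (-b) = wOf α β Δ (cOf s) b := by
  have hα : 0 < α := hposα
  have hαZ : (0:ℤ) < α := by exact_mod_cast hα
  set c := cOf s with hc
  have e1 : s - (-b + c) = b + c + 1 := by
    have := sub_cOf hodd s
    rw [hc]
    have h2 : s - (-b + c) = b + (s - c) := by ring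
    rw [h2, this]; ring
  have e2 : s - (-b + c + 1) = b + c := by
    have := sub_cOf hodd s
    have h2 : s - (-b + c + 1) = b + (s - c) - 1 := by ring
    rw [h2, this]; ring
  have k1 := hs (-b + c)
  have k2 := hs (-b + c + 1)
  rw [e1] at k1
  rw [e2] at k2
  have key : (α : ℤ) * (wOf α β Δ c (-b) : ℤ) = (α : ℤ) * (wOf α β Δ c b : ℤ) := by
    rw [wOf_spec hΔ, wOf_spec hΔ]
    linarith
  have h3 : (wOf α β Δ c (-b) : ℤ) = (wOf α β Δ c b : ℤ) := by
    have hne : (α : ℤ) ≠ 0 := by positivity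
    exact mul_left_cancel₀ hne key
  exact_mod_cast h3

lemma Tz_of_wOf (hΔ : IsNormalizedSemimodule α β Δ) (c : ZMod α) (x : ZMod α) :
    Tz α β (wOf α β Δ c) x = (nu α β Δ (x + c) : ℤ) - (nu α β Δ c : ℤ) := by
  have hα : 0 < α := hposα
  have hsum := wOf_sum hΔ c
  have key : ∀ n : ℕ, Tz α β (wOf α β Δ c) ((n : ZMod α)) =
      (nu α β Δ (((n : ZMod α)) + c) : ℤ) - (nu α β Δ c : ℤ) := by
    intro n
    induction n with
    | zero => simp [Tz, ZMod.val_zero, Tfun]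
    | succ n ih =>
      push_cast
      set y : ZMod α := (n : ZMod α)
      rw [Tz_succ _ hsum y, ih]
      have := wOf_spec hΔ c y
      have e : y + 1 + c = y + c + 1 := by ring
      rw [e]
      linarith
  have hx : ((x.val : ℕ) : ZMod α) = x := by rw [ZMod.natCast_val, ZMod.cast_id]
  have := key x.val
  rwa [hx] at this

lemma bstar_of_wOf (hcop : Nat.Coprime α β) (hΔ : IsNormalizedSemimodule α β Δ) (c : ZMod α) :
    bstar α β (wOf α β Δ c) = -c := by
  have hα : 0 < α := hposα
  have hsum := wOf_sum hΔ c
  have h1 : ∀ y : ZMod α, Tz α β (wOf α β Δ c) (-c) ≤ Tz α β (wOf α β Δ c) y := by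
    intro y
    rw [Tz_of_wOf hΔ, Tz_of_wOf hΔ]
    simp only [neg_add_cancel]
    rw [nu_zero hΔ]
    have : (0:ℤ) ≤ (nu α β Δ (y + c) : ℤ) := by positivity
    push_cast
    linarith
  have h2 := bstar_min α β (wOf α β Δ c) (-c)
  have h3 := h1 (bstar α β (wOf α β Δ c))
  exact Tz_inj hcop _ hsum (le_antisymm h3 h2).symm

lemma theta_of_wOf (hcop : Nat.Coprime α β) (hΔ : IsNormalizedSemimodule α β Δ)
    (c : ZMod α) (b : ZMod α) :
    theta α β (wOf α β Δ c) b = (nu α β Δ b : ℤ) := by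
  rw [theta, bstar_of_wOf hcop hΔ c, Tz_of_wOf hΔ, Tz_of_wOf hΔ]
  simp [nu_zero hΔ]

lemma DeltaOf_wOf (hcop : Nat.Coprime α β) (hΔ : IsNormalizedSemimodule α β Δ) (c : ZMod α) :
    DeltaOf α β (wOf α β Δ c) = Δ := by
  have hα : 0 < α := hposα
  ext x
  rw [DeltaOf, Set.mem_setOf_eq, theta_of_wOf hcop hΔ c, mem_iff_nu_le hα hΔ hcop x]

lemma wOf_DeltaOf (hcop : Nat.Coprime α β) (hodd : Odd α) (w : ZMod α → ℕ)
    (hsum : ∑ b : ZMod α, w b = β) (b : ZMod α) :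
    wOf α β (DeltaOf α β w) (-(bstar α β w)) b = w b := by
  have hα : 0 < α := hposα
  have hαZ : (0:ℤ) < α := by exact_mod_cast hα
  have hΔ := nsm_DeltaOf hcop w hsum
  have key : (α : ℤ) * (wOf α β (DeltaOf α β w) (-(bstar α β w)) b : ℤ) = α * w b := by
    rw [wOf_spec hΔ]
    rw [nu_DeltaOf hcop w hsum, nu_DeltaOf hcop w hsum]
    have e1 : b + -(bstar α β w) + 1 + bstar α β w = b + 1 := by ring
    have e2 : b + -(bstar α β w) + bstar α β w = b := by ring
    rw [theta, theta, e1, e2]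
    have := Tz_succ w hsum b
    linarith
  have h3 : (wOf α β (DeltaOf α β w) (-(bstar α β w)) b : ℤ) = (w b : ℤ) := by
    have hne : (α : ℤ) ≠ 0 := by positivity
    exact mul_left_cancel₀ hne key
  exact_mod_cast h3

end Phi

section Count
variable [NeZero α]

lemma sum_range_cast (f : ZMod α → ℕ) :
    ∑ j ∈ Finset.range α, f ((j : ℕ) : ZMod α) = ∑ b : ZMod α, f b := by
  have hbij : Function.Bijective (fun j : Fin α => (((j : ℕ) : ℕ) : ZMod α)) := by
    rw [Fintype.bijective_iff_injective_and_card]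
    refine ⟨?_, by simp [ZMod.card]⟩
    intro i j hij
    simp only at hij
    have hi := ZMod.val_cast_of_lt i.2
    have hj := ZMod.val_cast_of_lt j.2
    have : (i : ℕ) = (j : ℕ) := by rw [← hi, ← hj, hij]
    exact Fin.ext this
  rw [← Fintype.sum_bijective _ hbij (fun j => f (((j : ℕ) : ℕ) : ZMod α)) f (fun j => rfl)]
  exact (Fin.sum_univ_eq_sum_range (fun j => f ((j : ℕ) : ZMod α)) α).symm

lemma sum_zmod_symm {a : ℕ} (hα2 : α = 2 * a + 1) (f : ZMod α → ℕ)
    (hsym : ∀ b, f (-b) = f b) :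
    ∑ b : ZMod α, f b = f 0 + 2 * ∑ n ∈ Finset.range a, f (((n + 1 : ℕ)) : ZMod α) := by
  have hre : Finset.range α = Finset.range (a + 1 + a) := by
    rw [show α = a + 1 + a by omega]
  have hsplit : ∑ j ∈ Finset.range α, f ((j : ℕ) : ZMod α) =
      (∑ j ∈ Finset.range (a + 1), f ((j : ℕ) : ZMod α)) +
      ∑ j ∈ Finset.range a, f (((a + 1 + j : ℕ)) : ZMod α) := by
    rw [hre, Finset.sum_range_add]
  have hlow : ∑ j ∈ Finset.range (a + 1), f ((j : ℕ) : ZMod α) =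
      f 0 + ∑ j ∈ Finset.range a, f (((j + 1 : ℕ)) : ZMod α) := by
    rw [Finset.sum_range_succ']
    simp [add_comm]
  have hneg : ∀ j, j < a → (((a + 1 + j : ℕ)) : ZMod α) = -(((a - j : ℕ)) : ZMod α) := by
    intro j hj
    rw [eq_neg_iff_add_eq_zero]
    have h1 : ((a + 1 + j : ℕ) : ZMod α) + ((a - j : ℕ) : ZMod α) =
        (((a + 1 + j) + (a - j) : ℕ) : ZMod α) := by push_cast; ring
    rw [h1, show (a + 1 + j) + (a - j) = α by omega, ZMod.natCast_self]
  have hhigh : ∑ j ∈ Finset.range a, f (((a + 1 + j : ℕ)) : ZMod α) =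
      ∑ j ∈ Finset.range a, f (((j + 1 : ℕ)) : ZMod α) := by
    rw [← Finset.sum_range_reflect (fun j => f (((j + 1 : ℕ)) : ZMod α)) a]
    refine Finset.sum_congr rfl (fun j hj => ?_)
    rw [Finset.mem_range] at hj
    rw [hneg j hj, hsym]
    congr 2
    omega
  rw [← sum_range_cast f, hsplit, hlow, hhigh]
  ring

variable {a B : ℕ}

/-- index folding. -/
def symIdx (hα2 : α = 2 * a + 1) (b : ZMod α) : Fin (a + 1) :=
  ⟨min b.val (α - b.val), by have := ZMod.val_lt b; omega⟩

/-- the symmetric function built from a tuple. -/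
def symFun (hα2 : α = 2 * a + 1) (v : Fin (a + 1) → ℕ) (b : ZMod α) : ℕ :=
  if b = 0 then 2 * v 0 + 1 else v (symIdx hα2 b)

/-- the tuple extracted from a symmetric function. -/
def vOf (α : ℕ) [NeZero α] (w : ZMod α → ℕ) (n : ℕ) : ℕ :=
  if n = 0 then w 0 / 2 else w ((n : ℕ) : ZMod α)

lemma val_neg_ne (b : ZMod α) (hb : b ≠ 0) : (-b).val = α - b.val := by
  haveI : NeZero b := ⟨hb⟩
  exact ZMod.val_neg_of_ne_zero b

lemma symFun_symm (hα2 : α = 2 * a + 1) (v : Fin (a + 1) → ℕ) (b : ZMod α) :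
    symFun hα2 v (-b) = symFun hα2 v b := by
  by_cases hb : b = 0
  · rw [hb, neg_zero]
  · have hnb : -b ≠ 0 := by simpa using hb
    rw [symFun, symFun, if_neg hnb, if_neg hb]
    congr 1
    rw [symIdx, symIdx, Fin.mk.injEq, val_neg_ne b hb]
    have h1 := ZMod.val_lt b
    have h2 : b.val ≠ 0 := fun h => hb ((ZMod.val_eq_zero b).mp h)
    omega

lemma cast_succ_ne_zero (hα2 : α = 2 * a + 1) {n : ℕ} (hn : n < a) :
    (((n + 1 : ℕ)) : ZMod α) ≠ 0 := by
  intro h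
  have := (ZMod.natCast_eq_zero_iff (n + 1) α).mp h
  have := Nat.le_of_dvd (by omega) this
  omega

lemma val_cast_succ (hα2 : α = 2 * a + 1) {n : ℕ} (hn : n < a) :
    ((((n + 1 : ℕ)) : ZMod α)).val = n + 1 :=
  ZMod.val_cast_of_lt (by omega)

lemma symFun_cast_succ (hα2 : α = 2 * a + 1) (v : Fin (a + 1) → ℕ) {n : ℕ} (hn : n < a) :
    symFun hα2 v (((n + 1 : ℕ)) : ZMod α) = v ⟨n + 1, by omega⟩ := by
  rw [symFun, if_neg (cast_succ_ne_zero hα2 hn)]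
  congr 1
  rw [symIdx, Fin.mk.injEq, val_cast_succ hα2 hn]
  omega

lemma sum_fin_vof (w : ZMod α → ℕ) :
    ∑ i : Fin (a + 1), vOf α w (i : ℕ) =
      w 0 / 2 + ∑ n ∈ Finset.range a, w (((n + 1 : ℕ)) : ZMod α) := by
  rw [Fin.sum_univ_eq_sum_range (fun n => vOf α w n) (a + 1), Finset.sum_range_succ']
  have e0 : vOf α w 0 = w 0 / 2 := if_pos rfl
  have e1 : ∀ j : ℕ, vOf α w (j + 1) = w (((j + 1 : ℕ)) : ZMod α) := fun j => if_neg (by omega)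
  rw [Finset.sum_congr rfl (fun j _ => e1 j), e0, add_comm]

lemma symFun_sum (hα2 : α = 2 * a + 1) (hβ2 : β = 2 * B + 1) (v : Fin (a + 1) → ℕ)
    (hsum : ∑ i, v i = B) : ∑ b : ZMod α, symFun hα2 v b = β := by
  rw [sum_zmod_symm hα2 _ (symFun_symm hα2 v)]
  have h0 : symFun hα2 v 0 = 2 * v 0 + 1 := by rw [symFun, if_pos rfl]
  set g : ℕ → ℕ := fun n => if h : n < a + 1 then v ⟨n, h⟩ else 0 with hg
  have h1 : ∑ n ∈ Finset.range a, symFun hα2 v (((n + 1 : ℕ)) : ZMod α) =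
      ∑ n ∈ Finset.range a, g (n + 1) := by
    refine Finset.sum_congr rfl (fun n hn => ?_)
    rw [Finset.mem_range] at hn
    rw [symFun_cast_succ hα2 v hn]
    simp only [hg]
    rw [dif_pos (by omega : n + 1 < a + 1)]
  have h2 : ∑ i : Fin (a + 1), v i = v 0 + ∑ n ∈ Finset.range a, g (n + 1) := by
    have e : ∀ i : Fin (a + 1), v i = g ((i : ℕ)) := by
      intro i
      simp only [hg]
      rw [dif_pos i.2]
    rw [Finset.sum_congr rfl (fun i _ => e i), Fin.sum_univ_eq_sum_range g (a + 1),
      Finset.sum_range_succ', add_comm]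
    congr 1
  rw [h0, h1]
  rw [h2] at hsum
  omega

lemma w_zero_odd (hα2 : α = 2 * a + 1) (hβ2 : β = 2 * B + 1) (w : ZMod α → ℕ)
    (hsum : ∑ b : ZMod α, w b = β) (hsym : ∀ b, w (-b) = w b) : w 0 % 2 = 1 := by
  have hkey := sum_zmod_symm hα2 w hsym
  rw [hsum] at hkey
  omega

lemma vOf_symFun (hα2 : α = 2 * a + 1) (v : Fin (a + 1) → ℕ) (i : Fin (a + 1)) :
    vOf α (symFun hα2 v) (i : ℕ) = v i := by
  by_cases hi : (i : ℕ) = 0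
  · have hi0 : i = 0 := Fin.ext (by simpa using hi)
    rw [vOf, if_pos hi, symFun, if_pos rfl, hi0]
    omega
  · obtain ⟨n, hn⟩ : ∃ n, (i : ℕ) = n + 1 := ⟨(i : ℕ) - 1, by omega⟩
    have hna : n < a := by have := i.2; omega
    rw [vOf, if_neg hi, hn, symFun_cast_succ hα2 v hna]
    congr 1
    exact Fin.ext (by simp [hn])

lemma symFun_vOf (hα2 : α = 2 * a + 1) (hβ2 : β = 2 * B + 1) (w : ZMod α → ℕ)
    (hsum : ∑ b : ZMod α, w b = β) (hsym : ∀ b, w (-b) = w b) (b : ZMod α) :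
    symFun hα2 (fun i => vOf α w (i : ℕ)) b = w b := by
  by_cases hb : b = 0
  · rw [hb, symFun, if_pos rfl]
    beta_reduce
    rw [vOf, if_pos (by simp : ((0 : Fin (a + 1)) : ℕ) = 0)]
    have hodd := w_zero_odd hα2 hβ2 w hsum hsym
    omega
  · rw [symFun, if_neg hb]
    beta_reduce
    have hval := ZMod.val_lt b
    have hv0 : b.val ≠ 0 := fun h => hb ((ZMod.val_eq_zero b).mp h)
    have hidx : ((symIdx hα2 b) : ℕ) = min b.val (α - b.val) := rfl
    have hbb : ((b.val : ℕ) : ZMod α) = b := by rw [ZMod.natCast_val, ZMod.cast_id]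
    by_cases hle : b.val ≤ a
    · have hm : ((symIdx hα2 b) : ℕ) = b.val := by rw [hidx]; omega
      rw [hm, vOf, if_neg hv0, hbb]
    · have hm : ((symIdx hα2 b) : ℕ) = α - b.val := by rw [hidx]; omega
      rw [hm, vOf, if_neg (by omega)]
      have h3 : ((α - b.val : ℕ) : ZMod α) + ((b.val : ℕ) : ZMod α) = 0 := by
        rw [← Nat.cast_add, show α - b.val + b.val = α by omega, ZMod.natCast_self]
      rw [hbb] at h3
      have hcast : ((α - b.val : ℕ) : ZMod α) = -b := by
        rw [eq_neg_iff_add_eq_zero]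
        exact h3
      rw [hcast, hsym]

/-- symmetric weight functions are equivalent to free tuples. -/
noncomputable def WVequiv (hα2 : α = 2 * a + 1) (hβ2 : β = 2 * B + 1) :
    {w : ZMod α → ℕ // (∑ b : ZMod α, w b) = β ∧ ∀ b, w (-b) = w b} ≃
      {v : Fin (a + 1) → ℕ // ∑ i, v i = B} where
  toFun wp := ⟨fun i => vOf α wp.1 (i : ℕ), by
    have h := sum_fin_vof (a := a) wp.1
    have hkey := sum_zmod_symm hα2 wp.1 wp.2.2
    rw [wp.2.1] at hkey
    have hodd : wp.1 0 % 2 = 1 := by omega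
    show ∑ i : Fin (a + 1), vOf α wp.1 (i : ℕ) = B
    rw [h]
    omega⟩
  invFun vp := ⟨symFun hα2 vp.1, symFun_sum hα2 hβ2 vp.1 vp.2, symFun_symm hα2 vp.1⟩
  left_inv wp := Subtype.ext (funext fun b => symFun_vOf hα2 hβ2 wp.1 wp.2.1 wp.2.2 b)
  right_inv vp := Subtype.ext (funext fun i => vOf_symFun hα2 vp.1 i)

lemma card_finset_sum {ι : Type*} (s : Finset ι) (f : ι → Multiset (Fin (a + 1))) :
    Multiset.card (∑ i ∈ s, f i) = ∑ i ∈ s, Multiset.card (f i) := by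
  classical
  induction s using Finset.induction_on with
  | empty => simp
  | insert _ _ hns ih =>
    rw [Finset.sum_insert hns, Finset.sum_insert hns, Multiset.card_add, ih]

/-- tuples with fixed sum are equivalent to `Sym`. -/
noncomputable def VSymEquiv (a B : ℕ) :
    {v : Fin (a + 1) → ℕ // ∑ i, v i = B} ≃ Sym (Fin (a + 1)) B where
  toFun vp := ⟨∑ i, Multiset.replicate (vp.1 i) i, by
    rw [card_finset_sum]
    simp only [Multiset.card_replicate]
    exact vp.2⟩
  invFun s := ⟨fun i => Multiset.count i s.1, by
    have := Multiset.sum_count_eq_card (s := (Finset.univ : Finset (Fin (a + 1)))) (m := s.1)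
      (fun x _ => Finset.mem_univ x)
    rw [this, s.2]⟩
  left_inv vp := by
    apply Subtype.ext
    funext i
    show Multiset.count i (∑ j, Multiset.replicate (vp.1 j) j) = vp.1 i
    rw [Multiset.count_sum']
    rw [Finset.sum_congr rfl (fun j _ => Multiset.count_replicate i j (vp.1 j))]
    simp
  right_inv s := by
    apply Subtype.ext
    show (∑ j, Multiset.replicate (Multiset.count j s.1) j) = s.1
    ext j
    rw [Multiset.count_sum']
    rw [Finset.sum_congr rfl (fun i _ => Multiset.count_replicate j i (Multiset.count i s.1))]
    simp

/-- main equivalence: selfdual semimodules and symmetric weight functions. -/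
noncomputable def mainEquiv (hβ : 0 < β) (hcop : Nat.Coprime α β) (hodd : Odd α) :
    {Δ : Set ℤ // IsNormalizedSemimodule α β Δ ∧ IsSelfdual α β Δ} ≃
      {w : ZMod α → ℕ // (∑ b : ZMod α, w b) = β ∧ ∀ b, w (-b) = w b} where
  toFun Δp :=
    let hΔ := Δp.2.1
    let hα : 0 < α := hposα
    let hcen := (symm_iff_center hα hcop hΔ).mp ((selfdual_iff_symm hα hβ hcop hΔ).mp Δp.2.2)
    ⟨wOf α β Δp.1 (cOf (Classical.choose hcen)),
      wOf_sum hΔ _, wOf_symm hΔ hodd (Classical.choose_spec hcen)⟩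
  invFun wp := ⟨DeltaOf α β wp.1, nsm_DeltaOf hcop wp.1 wp.2.1,
    selfdual_DeltaOf hβ hcop wp.1 wp.2.1 wp.2.2⟩
  left_inv Δp := Subtype.ext (DeltaOf_wOf hcop Δp.2.1 _)
  right_inv wp := by
    apply Subtype.ext
    funext b
    obtain ⟨w, hsum, hsym⟩ := wp
    simp only
    set Δ := DeltaOf α β w with hΔdef
    have hα : 0 < α := hposα
    have hΔ := nsm_DeltaOf hcop w hsum
    have hcen := (symm_iff_center hα hcop hΔ).mp
      ((selfdual_iff_symm hα hβ hcop hΔ).mp (selfdual_DeltaOf hβ hcop w hsum hsym))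
    have hs' := Classical.choose_spec hcen
    have hs0 : ∀ bb : ZMod α, (nu α β Δ bb : ℤ) + (nu α β Δ ((1 - 2 * bstar α β w) - bb) : ℤ) =
        (nu α β Δ (1 - 2 * bstar α β w) : ℤ) := by
      intro bb
      rw [nu_DeltaOf hcop w hsum, nu_DeltaOf hcop w hsum, nu_DeltaOf hcop w hsum]
      exact center_DeltaOf w hsum hsym bb
    have hseq : Classical.choose hcen = 1 - 2 * bstar α β w :=
      center_unique hcop hΔ hs' hs0
    have hcof : cOf (Classical.choose hcen) = -(bstar α β w) := by
      apply half_unique hodd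
      rw [two_mul_cOf hodd, hseq]
      ring
    rw [hcof]
    exact wOf_DeltaOf hcop hodd w hsum b

end Count


end SelfdualCount

/-- If `α` and `β` are both odd, the total number of selfdual semimodules is
`C((α-1)/2 + (β-1)/2, (α-1)/2)`. -/
theorem count_selfdual_odd_odd (α β : ℕ)
    (hα : 3 ≤ α) (hαβ : α < β) (hcop : Nat.Coprime α β)
    (hαodd : Odd α) (hβodd : Odd β) :
    {Δ : Set ℤ | IsNormalizedSemimodule α β Δ ∧ IsSelfdual α β Δ}.ncard =
      Nat.choose ((α - 1) / 2 + (β - 1) / 2) ((α - 1) / 2) := by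
  haveI : NeZero α := ⟨by omega⟩
  obtain ⟨a, ha⟩ := hαodd
  obtain ⟨B, hB⟩ := hβodd
  have hα2 : α = 2 * a + 1 := by omega
  have hβ2 : β = 2 * B + 1 := by omega
  have hβ0 : 0 < β := by omega
  have e := (SelfdualCount.mainEquiv hβ0 hcop ⟨a, ha⟩).trans
    ((SelfdualCount.WVequiv hα2 hβ2).trans (SelfdualCount.VSymEquiv a B))
  have h1 : {Δ : Set ℤ | IsNormalizedSemimodule α β Δ ∧ IsSelfdual α β Δ}.ncard =
      Nat.card {Δ : Set ℤ // IsNormalizedSemimodule α β Δ ∧ IsSelfdual α β Δ} := by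
    rw [← Nat.card_coe_set_eq]
    rfl
  rw [h1, Nat.card_congr e, Nat.card_eq_fintype_card, Sym.card_sym_eq_choose]
  have hc : Fintype.card (Fin (a + 1)) = a + 1 := by simp
  rw [hc]
  have e1 : (α - 1) / 2 = a := by omega
  have e2 : (β - 1) / 2 = B := by omega
  rw [e1, e2]
  have e3 : a + 1 + B - 1 = a + B := by omega
  rw [e3]
  have := Nat.choose_symm (by omega : a ≤ a + B)
  have e4 : a + B - a = B := by omega
  rw [e4] at this
  exact this
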